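/- arXiv:2503.07132 — 2 statements merged into one kernel-verified Lean document; each statement's English description precedes it below -/
import Mathlib

section
/- For all non-negative integers n, q, t, s, p with q ≥ 1, t > s, s + p < n, (s, p) ≠ (0, 0), and every sequence x ∈ A_q^n with more than one run, the strict inequality |B_{t,s,p}(x)| > Σ_{i=0}^{t+p} C(n+t-s, i) (q-1)^i holds. -/
set_option maxHeartbeats 1000000

open Finset


/-- The subsequence of `x` indexed by the finite set `S` of size `m`,
entries taken in increasing index order. -/
def subseqOf {q n m : ℕ} (x : Fin n → Fin q) (S : Finset (Fin n)) (h : S.card = m) :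
    Fin m → Fin q :=
  fun i => x ((S.orderIsoOfFin h i : Fin n))

/-- The insertion/deletion/substitution ball of `x ∈ A_q^n`: all sequences `z` of
length `m` such that some subsequence of `x` of length `n - s` is within Hamming
distance `p` of some subsequence of `z` of the same length.  For the `t`-insertion
`s`-deletion `p`-substitution ball `B_{t,s,p}(x)`, take `m = n + t - s`. -/
def idsBall (q s p : ℕ) {n m : ℕ} (x : Fin n → Fin q) : Set (Fin m → Fin q) :=
  { z | ∃ (S1 : Finset (Fin n)) (S2 : Finset (Fin m))
      (h1 : S1.card = n - s) (h2 : S2.card = n - s),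
      hammingDist (subseqOf x S1 h1) (subseqOf z S2 h2) ≤ p }



/-- Hamming-type volume `∑_{i≤r} C(m,i)(q-1)^i`. -/
def Vq (q m r : ℕ) : ℕ := ∑ i ∈ Finset.range (r+1), m.choose i * (q-1)^i

lemma Vq_zero (q m : ℕ) : Vq q m 0 = 1 := by simp [Vq]

lemma Vq_pascal (q m r : ℕ) : Vq q (m+1) (r+1) = Vq q m (r+1) + (q-1) * Vq q m r := by
  unfold Vq
  rw [Finset.sum_range_succ' (fun i => (m+1).choose i * (q-1)^i),
      Finset.sum_range_succ' (fun i => m.choose i * (q-1)^i)]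
  simp only [Nat.choose_succ_succ, Nat.choose_zero_right, pow_zero, mul_one, add_mul]
  rw [Finset.sum_add_distrib, Finset.mul_sum]
  have : ∀ i ∈ Finset.range (r+1), m.choose i * (q-1)^(i+1) = (q-1) * (m.choose i * (q-1)^i) := by
    intro i _; ring
  rw [Finset.sum_congr rfl this]
  simp only [Nat.succ_eq_add_one]
  omega

lemma Vq_full (q m r : ℕ) (hq : 1 ≤ q) (h : m ≤ r) : Vq q m r = q^m := by
  unfold Vq
  rw [← Finset.sum_subset (Finset.range_subset_range.2 (by omega) :
      Finset.range (m+1) ⊆ Finset.range (r+1))]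
  · have h1 : q - 1 + 1 = q := by omega
    calc ∑ i ∈ Finset.range (m+1), m.choose i * (q-1)^i
        = ∑ i ∈ Finset.range (m+1), (q-1)^i * 1^(m-i) * m.choose i := by
          apply Finset.sum_congr rfl; intro i _; ring
      _ = ((q-1) + 1)^m := (add_pow (q-1) 1 m).symm
      _ = q^m := by rw [h1]
  · intro i hi hni
    simp only [Finset.mem_range] at hi hni
    rw [Nat.choose_eq_zero_of_lt (by omega), zero_mul]

lemma Vq_mono (q m : ℕ) {r r' : ℕ} (h : r ≤ r') : Vq q m r ≤ Vq q m r' :=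
  Finset.sum_le_sum_of_subset (Finset.range_subset_range.2 (by omega))

section Ham

variable {q n m : ℕ}

lemma ham_cons (c d : Fin q) (u w : Fin n → Fin q) :
    hammingDist (Fin.cons c u : Fin (n+1) → Fin q) (Fin.cons d w)
      = (if c = d then 0 else 1) + hammingDist u w := by
  unfold hammingDist
  rw [Finset.card_filter, Finset.card_filter, Fin.sum_univ_succ]
  simp [Fin.cons_zero, Fin.cons_succ]

lemma ham_comp_equiv (u w : Fin n → Fin q) (e : Fin m ≃ Fin n) :
    hammingDist (u ∘ e) (w ∘ e) = hammingDist u w := by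
  unfold hammingDist
  apply Finset.card_bij (fun i _ => e i)
  · intro a ha
    simpa using (Finset.mem_filter.1 ha).2
  · intro a _ b _ h
    exact e.injective h
  · intro b hb
    refine ⟨e.symm b, ?_, by simp⟩
    simp only [Finset.mem_filter, Finset.mem_univ, true_and, Function.comp_apply,
      Equiv.apply_symm_apply]
    simpa using (Finset.mem_filter.1 hb).2

lemma ham_le_of_agree (u w : Fin n → Fin q) (j : Fin n) (h : u j = w j) :
    hammingDist u w ≤ n - 1 := by
  unfold hammingDist
  have hsub : ({i | u i ≠ w i} : Finset (Fin n)) ⊆ Finset.univ.erase j := by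
    intro i hi
    simp only [Finset.mem_filter] at hi
    refine Finset.mem_erase.2 ⟨?_, Finset.mem_univ _⟩
    rintro rfl; exact hi.2 h
  calc _ ≤ (Finset.univ.erase j).card := Finset.card_le_card hsub
    _ = n - 1 := by rw [Finset.card_erase_of_mem (Finset.mem_univ _)]; simp

end Ham

/-- the `r`-error subsequence ball: all `z` having a full-length-`n` subsequence within
Hamming distance `r` of `x`. -/
def BS (r : ℕ) {q n m : ℕ} (x : Fin n → Fin q) : Set (Fin m → Fin q) :=
  {z | ∃ f : Fin n → Fin m, StrictMono f ∧ hammingDist (z ∘ f) x ≤ r}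

section BSlemmas

variable {q n m r : ℕ}

lemma BS_empty (r : ℕ) (x : Fin 0 → Fin q) :
    (BS r x : Set (Fin m → Fin q)) = Set.univ := by
  ext z
  simp only [BS, Set.mem_setOf_eq, Set.mem_univ, iff_true]
  refine ⟨Fin.elim0, fun i => i.elim0, ?_⟩
  calc hammingDist (z ∘ Fin.elim0) x ≤ Fintype.card (Fin 0) := hammingDist_le_card_fintype
    _ = 0 := by simp
    _ ≤ r := Nat.zero_le r

lemma strictMono_cons_zero {f : Fin n → Fin m} (hf : StrictMono f) :
    StrictMono (Fin.cons 0 (Fin.succ ∘ f) : Fin (n+1) → Fin (m+1)) := by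
  intro i j hij
  induction j using Fin.cases with
  | zero => exact absurd hij (by simp [Fin.le_zero_iff])
  | succ j =>
    induction i using Fin.cases with
    | zero => simp only [Fin.cons_zero, Fin.cons_succ, Function.comp_apply]; exact Fin.succ_pos _
    | succ i =>
      simp only [Fin.cons_succ, Function.comp_apply]
      exact Fin.succ_lt_succ_iff.2 (hf (Fin.succ_lt_succ_iff.1 hij))

lemma consMem1 (x : Fin (n+1) → Fin q) {z' : Fin m → Fin q}
    (h : z' ∈ (BS r (x ∘ Fin.succ) : Set (Fin m → Fin q))) :
    (Fin.cons (x 0) z' : Fin (m+1) → Fin q) ∈ (BS r x : Set (Fin (m+1) → Fin q)) := by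
  obtain ⟨f, hf, hd⟩ := h
  refine ⟨Fin.cons 0 (Fin.succ ∘ f), strictMono_cons_zero hf, ?_⟩
  have he : (Fin.cons (x 0) z' : Fin (m+1) → Fin q) ∘ (Fin.cons 0 (Fin.succ ∘ f)) =
      Fin.cons (x 0) (z' ∘ f) := by
    funext i
    induction i using Fin.cases with
    | zero => simp
    | succ i => simp
  rw [he, ← Fin.cons_self_tail x, ham_cons]
  have : Fin.tail x = x ∘ Fin.succ := rfl
  rw [this]
  simpa using hd

lemma consMem3 (x : Fin (n+1) → Fin q) (c : Fin q) {z' : Fin m → Fin q}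
    (h : z' ∈ (BS r (x ∘ Fin.succ) : Set (Fin m → Fin q))) :
    (Fin.cons c z' : Fin (m+1) → Fin q) ∈ (BS (r+1) x : Set (Fin (m+1) → Fin q)) := by
  obtain ⟨f, hf, hd⟩ := h
  refine ⟨Fin.cons 0 (Fin.succ ∘ f), strictMono_cons_zero hf, ?_⟩
  have he : (Fin.cons c z' : Fin (m+1) → Fin q) ∘ (Fin.cons 0 (Fin.succ ∘ f)) =
      Fin.cons c (z' ∘ f) := by
    funext i
    induction i using Fin.cases with
    | zero => simp
    | succ i => simp
  rw [he, ← Fin.cons_self_tail x, ham_cons]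
  have : Fin.tail x = x ∘ Fin.succ := rfl
  rw [this]
  split <;> omega

lemma consMem2 (x : Fin n → Fin q) (c : Fin q) {z' : Fin m → Fin q}
    (h : z' ∈ (BS r x : Set (Fin m → Fin q))) :
    (Fin.cons c z' : Fin (m+1) → Fin q) ∈ (BS r x : Set (Fin (m+1) → Fin q)) := by
  obtain ⟨f, hf, hd⟩ := h
  refine ⟨Fin.succ ∘ f, fun i j hij => Fin.succ_lt_succ_iff.2 (hf hij), ?_⟩
  have he : (Fin.cons c z' : Fin (m+1) → Fin q) ∘ (Fin.succ ∘ f) = z' ∘ f := by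
    funext i; simp
  rwa [he]

end BSlemmas

section Rev

variable {q n m r : ℕ}

lemma BS_rev_subset (x : Fin n → Fin q) :
    (fun z : Fin m → Fin q => z ∘ Fin.rev) '' BS r x ⊆ (BS r (x ∘ Fin.rev)) := by
  rintro _ ⟨z, ⟨f, hf, hd⟩, rfl⟩
  refine ⟨fun i => Fin.rev (f (Fin.rev i)), ?_, ?_⟩
  · intro i j hij
    exact Fin.rev_lt_rev.2 (hf (Fin.rev_lt_rev.2 hij))
  · have he : (z ∘ Fin.rev) ∘ (fun i => Fin.rev (f (Fin.rev i))) = (z ∘ f) ∘ Fin.rev := by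
      funext i; simp [Fin.rev_rev]
    rw [he]
    have := ham_comp_equiv (z ∘ f) x (Fin.revPerm)
    have hrp : ((z ∘ f) ∘ ⇑Fin.revPerm) = (z ∘ f) ∘ Fin.rev := rfl
    have hrp2 : (x ∘ ⇑Fin.revPerm) = x ∘ Fin.rev := rfl
    rw [hrp, hrp2] at this
    rw [this]
    exact hd

lemma BS_rev_image (x : Fin n → Fin q) :
    (fun z : Fin m → Fin q => z ∘ Fin.rev) '' BS r x = (BS r (x ∘ Fin.rev)) := by
  apply Set.Subset.antisymm (BS_rev_subset x)
  intro z hz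
  have h2 := BS_rev_subset (q := q) (m := m) (x ∘ Fin.rev) (Set.mem_image_of_mem _ hz)
  have hxx : (x ∘ Fin.rev) ∘ Fin.rev = x := by funext i; simp [Fin.rev_rev]
  rw [hxx] at h2
  refine ⟨z ∘ Fin.rev, h2, ?_⟩
  funext i; simp [Fin.rev_rev]

lemma BS_rev_ncard (x : Fin n → Fin q) :
    (BS r (x ∘ Fin.rev) : Set (Fin m → Fin q)).ncard = (BS r x : Set (Fin m → Fin q)).ncard := by
  rw [← BS_rev_image]
  apply Set.ncard_image_of_injective
  intro a b hab
  funext i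
  have := congrFun hab (Fin.rev i)
  simpa [Fin.rev_rev] using this

end Rev

section Count

variable {q n m r : ℕ}

lemma ncard_prod (s : Set (Fin q)) (C : Set (Fin m → Fin q)) :
    (s ×ˢ C).ncard = s.ncard * C.ncard := by
  rw [← Nat.card_coe_set_eq, ← Nat.card_coe_set_eq, ← Nat.card_coe_set_eq]
  rw [Nat.card_congr (Equiv.Set.prod s C), Nat.card_prod]

lemma cons_uncurry_injective :
    Function.Injective (fun p : Fin q × (Fin m → Fin q) => (Fin.cons p.1 p.2 : Fin (m+1) → Fin q)) := by
  rintro ⟨c, z⟩ ⟨c', z'⟩ h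
  simp only [Prod.mk.injEq]
  constructor
  · have := congrFun h 0; simpa using this
  · funext i; have := congrFun h i.succ; simpa using this

lemma step_count (x : Fin (n+1) → Fin q) (C : Set (Fin m → Fin q))
    (hC : ∀ c (z' : Fin m → Fin q), c ≠ x 0 → z' ∈ C →
      (Fin.cons c z' : Fin (m+1) → Fin q) ∈ (BS r x : Set (Fin (m+1) → Fin q))) :
    (BS r (x ∘ Fin.succ) : Set (Fin m → Fin q)).ncard + (q-1) * C.ncard
      ≤ (BS r x : Set (Fin (m+1) → Fin q)).ncard := by
  classical
  set A : Set (Fin m → Fin q) := BS r (x ∘ Fin.succ) with hA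
  set U1 : Set (Fin (m+1) → Fin q) := (fun z => Fin.cons (x 0) z) '' A with hU1
  set U2 : Set (Fin (m+1) → Fin q) :=
    (fun p : Fin q × (Fin m → Fin q) => Fin.cons p.1 p.2) '' (({x 0}ᶜ : Set (Fin q)) ×ˢ C) with hU2
  have hsub : U1 ∪ U2 ⊆ BS r x := by
    rintro z (⟨z', hz', rfl⟩ | ⟨⟨c, z'⟩, hp, rfl⟩)
    · exact consMem1 x hz'
    · exact hC c z' (by simpa using hp.1) hp.2
  have hdisj : Disjoint U1 U2 := by
    rw [Set.disjoint_left]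
    rintro z ⟨z', _, rfl⟩ ⟨⟨c, w⟩, hp, he⟩
    have h0 := congrFun he 0
    simp only [Fin.cons_zero] at h0
    exact (by simpa using hp.1 : c ≠ x 0) h0
  have hcard : (U1 ∪ U2).ncard = U1.ncard + U2.ncard :=
    Set.ncard_union_eq hdisj (Set.toFinite _) (Set.toFinite _)
  have hc1 : U1.ncard = A.ncard := by
    apply Set.ncard_image_of_injective
    intro a b hab
    funext i; have := congrFun hab i.succ; simpa using this
  have hc2 : U2.ncard = (q-1) * C.ncard := by
    rw [hU2, Set.ncard_image_of_injective _ cons_uncurry_injective, ncard_prod]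
    congr 1
    have h1 := Set.ncard_add_ncard_compl ({x 0} : Set (Fin q))
    have h2 : ({x 0} : Set (Fin q)).ncard = 1 := Set.ncard_singleton _
    have h3 : Nat.card (Fin q) = q := by simp
    omega
  calc A.ncard + (q-1) * C.ncard = (U1 ∪ U2).ncard := by rw [hcard, hc1, hc2]
    _ ≤ (BS r x : Set (Fin (m+1) → Fin q)).ncard :=
        Set.ncard_le_ncard hsub (Set.toFinite _)

end Count

lemma ncard_BS_univ_pow {q m : ℕ} : (Set.univ : Set (Fin m → Fin q)).ncard = q ^ m := by
  rw [Set.ncard_univ, Nat.card_eq_fintype_card, Fintype.card_fun]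
  simp

lemma lemA {q : ℕ} (hq : 1 ≤ q) :
    ∀ m n r (x : Fin n → Fin q), n ≤ m →
      Vq q m (m - n + r) ≤ (BS r x : Set (Fin m → Fin q)).ncard := by
  intro m
  induction m with
  | zero =>
    intro n r x hn
    have hn0 : n = 0 := by omega
    subst hn0
    rw [BS_empty, ncard_BS_univ_pow]
    rw [Vq_full q 0 (0 - 0 + r) hq (by omega)]
  | succ m ih =>
    intro n r x hn
    match n with
    | 0 =>
      rw [BS_empty, ncard_BS_univ_pow]
      rw [Vq_full q (m+1) (m + 1 - 0 + r) hq (by omega)]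
    | n' + 1 =>
      by_cases hnm : n' + 1 ≤ m
      · have hstep := step_count x (BS r x : Set (Fin m → Fin q))
          (fun c z' _ hz' => consMem2 x c hz')
        have hA := ih n' r (x ∘ Fin.succ) (by omega)
        have hCc := ih (n'+1) r x hnm
        have e1 : m - n' + r = (m - (n'+1) + r) + 1 := by omega
        have e2 : (m+1) - (n'+1) + r = (m - (n'+1) + r) + 1 := by omega
        rw [e2, Vq_pascal]
        rw [e1] at hA
        calc Vq q m (m - (n'+1) + r + 1) + (q-1) * Vq q m (m - (n'+1) + r)
            ≤ (BS r (x ∘ Fin.succ) : Set (Fin m → Fin q)).ncard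
              + (q-1) * (BS r x : Set (Fin m → Fin q)).ncard := by
              exact Nat.add_le_add hA (Nat.mul_le_mul_left _ hCc)
          _ ≤ _ := hstep
      · have hn'm : n' = m := by omega
        subst hn'm
        match r with
        | 0 =>
          have hstep := step_count (r := 0) x (∅ : Set (Fin n' → Fin q)) (by intro c z' _ hz'; cases hz')
          have hA := ih n' 0 (x ∘ Fin.succ) (le_refl _)
          have e1 : (n'+1) - (n'+1) + 0 = 0 := by omega
          rw [e1, Vq_zero]
          have e2 : n' - n' + 0 = 0 := by omega
          rw [e2, Vq_zero] at hA
          simp only [Set.ncard_empty, Nat.mul_zero, Nat.add_zero] at hstep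
          omega
        | r' + 1 =>
          have hstep := step_count x (BS r' (x ∘ Fin.succ) : Set (Fin n' → Fin q))
            (fun c z' _ hz' => consMem3 x c hz')
          have hA := ih n' (r'+1) (x ∘ Fin.succ) (le_refl _)
          have hCc := ih n' r' (x ∘ Fin.succ) (le_refl _)
          have e1 : (n'+1) - (n'+1) + (r'+1) = r' + 1 := by omega
          have e2 : n' - n' + (r'+1) = r' + 1 := by omega
          have e3 : n' - n' + r' = r' := by omega
          rw [e1, Vq_pascal]
          rw [e2] at hA
          rw [e3] at hCc
          calc Vq q n' (r'+1) + (q-1) * Vq q n' r'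
              ≤ (BS (r'+1) (x ∘ Fin.succ) : Set (Fin n' → Fin q)).ncard
                + (q-1) * (BS r' (x ∘ Fin.succ) : Set (Fin n' → Fin q)).ncard :=
                Nat.add_le_add hA (Nat.mul_le_mul_left _ hCc)
            _ ≤ _ := hstep

section Base

variable {q n : ℕ}

/-- A non-constant word has two adjacent distinct letters. -/
lemma exists_adjacent_ne {x : Fin n → Fin q} (hx : ∃ i j, x i ≠ x j) :
    ∃ k : ℕ, ∃ h : k + 1 < n, x ⟨k, by omega⟩ ≠ x ⟨k+1, h⟩ := by
  by_contra hcon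
  push_neg at hcon
  have hall : ∀ k : ℕ, ∀ h : k < n, x ⟨k, h⟩ = x ⟨0, by omega⟩ := by
    intro k
    induction k with
    | zero => intro h; rfl
    | succ k ihk =>
      intro h
      have h1 : k < n := by omega
      rw [← hcon k h, ihk h1]
  obtain ⟨i, j, hij⟩ := hx
  exact hij (by rw [hall i.1 i.2, hall j.1 j.2])

lemma q_ge_two {x : Fin n → Fin q} (hx : ∃ i j, x i ≠ x j) : 2 ≤ q := by
  obtain ⟨i, j, hij⟩ := hx
  by_contra h
  exact hij (Fin.ext (by omega))

lemma base_box (x : Fin n → Fin q) (hn : 2 ≤ n) (hx : ∃ i j, x i ≠ x j) :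
    Vq q (n+1) n + 1 ≤ (BS (n-1) x : Set (Fin (n+1) → Fin q)).ncard := by
  classical
  have hq2 : 2 ≤ q := q_ge_two hx
  set U : Set (Fin (n+1) → Fin q) :=
    {z | ∃ j : Fin n, z (Fin.castSucc j) = x j ∨ z (Fin.succ j) = x j} with hU
  -- U is contained in the ball
  have hUB : U ⊆ (BS (n-1) x : Set (Fin (n+1) → Fin q)) := by
    rintro z ⟨j, hj | hj⟩
    · exact ⟨Fin.castSucc, Fin.strictMono_castSucc, ham_le_of_agree _ _ j hj⟩
    · exact ⟨Fin.succ, Fin.strictMono_succ, ham_le_of_agree _ _ j hj⟩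
  -- the complement of U is contained in a product set
  set forb : Fin (n+1) → Finset (Fin q) := fun i =>
    ((Finset.univ.filter (fun j : Fin n => Fin.castSucc j = i)).image x) ∪
    ((Finset.univ.filter (fun j : Fin n => Fin.succ j = i)).image x) with hforb
  set allowed : Fin (n+1) → Finset (Fin q) := fun i => Finset.univ \ forb i with hallowed
  have hUc : Uᶜ ⊆ ↑(Fintype.piFinset allowed) := by
    intro z hz
    simp only [Set.mem_compl_iff, hU, Set.mem_setOf_eq, not_exists, not_or] at hz
    rw [Finset.mem_coe, Fintype.mem_piFinset]
    intro i
    rw [hallowed]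
    simp only [Finset.mem_sdiff, Finset.mem_univ, true_and]
    intro hmem
    rw [hforb] at hmem
    rcases Finset.mem_union.1 hmem with h | h
    · obtain ⟨j, hj, hxj⟩ := Finset.mem_image.1 h
      apply (hz j).1
      rw [(Finset.mem_filter.1 hj).2]
      exact hxj.symm
    · obtain ⟨j, hj, hxj⟩ := Finset.mem_image.1 h
      apply (hz j).2
      rw [(Finset.mem_filter.1 hj).2]
      exact hxj.symm
  -- every coordinate has a nonempty forbidden set
  have hforb_ne : ∀ i : Fin (n+1), 1 ≤ (forb i).card := by
    intro i
    rw [Nat.one_le_iff_ne_zero, ← Nat.pos_iff_ne_zero, Finset.card_pos]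
    by_cases hi : (i : ℕ) < n
    · refine ⟨x ⟨i, hi⟩, Finset.mem_union_left _ ?_⟩
      exact Finset.mem_image.2 ⟨⟨i, hi⟩, Finset.mem_filter.2 ⟨Finset.mem_univ _, Fin.ext rfl⟩, rfl⟩
    · have hin : (i : ℕ) = n := by omega
      refine ⟨x ⟨n-1, by omega⟩, Finset.mem_union_right _ ?_⟩
      refine Finset.mem_image.2 ⟨⟨n-1, by omega⟩, Finset.mem_filter.2 ⟨Finset.mem_univ _, ?_⟩, rfl⟩
      apply Fin.ext
      simp [Fin.val_succ]
      omega
  -- some coordinate has at least two forbidden values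
  obtain ⟨k, hk, hkne⟩ := exists_adjacent_ne hx
  set i0 : Fin (n+1) := ⟨k+1, by omega⟩ with hi0
  have hforb_two : 2 ≤ (forb i0).card := by
    have h1 : x ⟨k, by omega⟩ ∈ forb i0 := by
      refine Finset.mem_union_right _ (Finset.mem_image.2 ⟨⟨k, by omega⟩,
        Finset.mem_filter.2 ⟨Finset.mem_univ _, Fin.ext rfl⟩, rfl⟩)
    have h2 : x ⟨k+1, hk⟩ ∈ forb i0 := by
      refine Finset.mem_union_left _ (Finset.mem_image.2 ⟨⟨k+1, hk⟩,
        Finset.mem_filter.2 ⟨Finset.mem_univ _, Fin.ext rfl⟩, rfl⟩)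
    have := Finset.one_lt_card.2 ⟨_, h2, _, h1, hkne.symm⟩
    omega
  -- bound the cardinality of the complement
  have hcard_allowed : ∀ i, (allowed i).card = q - (forb i).card := by
    intro i
    rw [hallowed]
    simp only [Finset.card_sdiff_of_subset (Finset.subset_univ _), Finset.card_univ, Fintype.card_fin]
  have hprod : (Fintype.piFinset allowed).card ≤ (q-2) * (q-1)^n := by
    rw [Fintype.card_piFinset]
    rw [← Finset.prod_erase_mul _ _ (Finset.mem_univ i0)]
    have h1 : ∏ i ∈ Finset.univ.erase i0, (allowed i).card ≤ (q-1)^n := by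
      calc ∏ i ∈ Finset.univ.erase i0, (allowed i).card
          ≤ ∏ _i ∈ Finset.univ.erase i0, (q-1) := by
            apply Finset.prod_le_prod'
            intro i _
            rw [hcard_allowed]
            have := hforb_ne i
            omega
        _ = (q-1)^n := by
            rw [Finset.prod_const, Finset.card_erase_of_mem (Finset.mem_univ _)]
            simp
    have h2 : (allowed i0).card ≤ q - 2 := by
      rw [hcard_allowed]; omega
    calc (∏ i ∈ Finset.univ.erase i0, (allowed i).card) * (allowed i0).card
        ≤ (q-1)^n * (q-2) := Nat.mul_le_mul h1 h2
      _ = (q-2) * (q-1)^n := Nat.mul_comm _ _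
  have hUc_card : (Uᶜ).ncard ≤ (q-2) * (q-1)^n := by
    calc (Uᶜ).ncard ≤ (↑(Fintype.piFinset allowed) : Set (Fin (n+1) → Fin q)).ncard :=
          Set.ncard_le_ncard hUc (Set.toFinite _)
      _ = (Fintype.piFinset allowed).card := Set.ncard_coe_finset _
      _ ≤ (q-2) * (q-1)^n := hprod
  --总 counting
  have hcompl := Set.ncard_add_ncard_compl U
  rw [Nat.card_eq_fintype_card, Fintype.card_fun, Fintype.card_fin,
    Fintype.card_fin] at hcompl
  have hVq : Vq q (n+1) n + (q-1)^(n+1) = q^(n+1) := by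
    have h1 : Vq q (n+1) (n+1) = q^(n+1) := Vq_full q (n+1) (n+1) (by omega) (le_refl _)
    have h2 : Vq q (n+1) (n+1) = Vq q (n+1) n + (n+1).choose (n+1) * (q-1)^(n+1) := by
      unfold Vq
      rw [Finset.sum_range_succ]
    rw [Nat.choose_self, one_mul] at h2
    omega
  have hpow : (q-1)^(n+1) = (q-1) * (q-1)^n := by ring
  have hpow1 : 1 ≤ (q-1)^n := Nat.one_le_pow _ _ (by omega)
  have hUcard : U.ncard + (Uᶜ).ncard = q^(n+1) := hcompl
  calc Vq q (n+1) n + 1 ≤ U.ncard := by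
        have : (q-2) * (q-1)^n + (q-1)^n ≤ (q-1) * (q-1)^n := by
          rw [← Nat.succ_mul]
          exact Nat.mul_le_mul_right _ (by omega)
        omega
    _ ≤ (BS (n-1) x : Set (Fin (n+1) → Fin q)).ncard :=
        Set.ncard_le_ncard hUB (Set.toFinite _)

end Base

section Strict

variable {q : ℕ}

/-- tail of the reverse is nonconstant when x is nonconstant with constant tail -/
lemma rev_tail_nonconst {n' : ℕ} (x : Fin (n'+1) → Fin q) (hn : 2 ≤ n')
    (hx : ∃ i j, x i ≠ x j)
    (htc : ∀ i j : Fin n', x (Fin.succ i) = x (Fin.succ j)) :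
    ∃ i j : Fin n', ((x ∘ Fin.rev) ∘ Fin.succ) i ≠ ((x ∘ Fin.rev) ∘ Fin.succ) j := by
  -- first : x 0 ≠ x 1
  have h01 : x 0 ≠ x ⟨1, by omega⟩ := by
    obtain ⟨i, j, hij⟩ := hx
    intro h01
    apply hij
    have hval : ∀ k : Fin (n'+1), x k = x 0 := by
      intro k
      rcases Nat.eq_zero_or_pos k.1 with hk | hk
      · congr 1; exact Fin.ext hk
      · have hk1 : k = Fin.succ ⟨k.1 - 1, by omega⟩ := by
          apply Fin.ext; simp [Fin.val_succ]; omega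
        have h1 : (⟨1, by omega⟩ : Fin (n'+1)) = Fin.succ ⟨0, by omega⟩ := by
          apply Fin.ext; simp
        rw [hk1, htc ⟨k.1-1, by omega⟩ ⟨0, by omega⟩, ← h1, ← h01]
    rw [hval i, hval j]
  refine ⟨⟨n'-1, by omega⟩, ⟨0, by omega⟩, ?_⟩
  have e1 : (Fin.rev (Fin.succ (⟨n'-1, by omega⟩ : Fin n')) : Fin (n'+1)) = 0 := by
    apply Fin.ext
    rw [Fin.val_rev]
    simp [Fin.val_succ]
    omega
  have e2 : (Fin.rev (Fin.succ (⟨0, by omega⟩ : Fin n')) : Fin (n'+1))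
      = Fin.succ ⟨n'-2, by omega⟩ := by
    apply Fin.ext
    rw [Fin.val_rev]
    simp [Fin.val_succ]
    omega
  simp only [Function.comp_apply]
  rw [e1, e2]
  have e3 : x (Fin.succ ⟨n'-2, by omega⟩) = x ⟨1, by omega⟩ := by
    have h1 : (⟨1, by omega⟩ : Fin (n'+1)) = Fin.succ ⟨0, by omega⟩ := by
      apply Fin.ext; simp
    rw [h1]
    exact htc _ _
  rw [e3]
  exact h01

lemma nonconst_rev {n : ℕ} (x : Fin n → Fin q) (hx : ∃ i j, x i ≠ x j) :
    ∃ i j, (x ∘ Fin.rev) i ≠ (x ∘ Fin.rev) j := by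
  obtain ⟨i, j, hij⟩ := hx
  exact ⟨Fin.rev i, Fin.rev j, by simpa [Fin.rev_rev] using hij⟩

lemma lemS : ∀ m n r (x : Fin n → Fin q), (∃ i j, x i ≠ x j) → 1 ≤ r → r < n → n < m →
    Vq q m (m - n + r) + 1 ≤ (BS r x : Set (Fin m → Fin q)).ncard := by
  intro m
  induction m with
  | zero => intro n r x _ _ _ hnm; omega
  | succ m ih =>
    intro n r x hx hr1 hrn hnm
    have hq2 : 2 ≤ q := q_ge_two hx
    have hq1 : 1 ≤ q := by omega
    have hn2 : 2 ≤ n := by omega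
    obtain ⟨n', rfl⟩ : ∃ n', n = n' + 1 := ⟨n - 1, by omega⟩
    by_cases hcase : n' + 1 < m
    · -- step case
      have hstep := step_count x (BS r x : Set (Fin m → Fin q))
        (fun c z' _ hz' => consMem2 x c hz')
      have hA := lemA hq1 m n' r (x ∘ Fin.succ) (by omega)
      have hS := ih (n'+1) r x hx hr1 hrn hcase
      have e1 : m - n' + r = (m - (n'+1) + r) + 1 := by omega
      have e2 : (m+1) - (n'+1) + r = (m - (n'+1) + r) + 1 := by omega
      rw [e2, Vq_pascal]
      rw [e1] at hA
      have hmul : (q-1) * (Vq q m (m - (n'+1) + r) + 1)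
          ≤ (q-1) * (BS r x : Set (Fin m → Fin q)).ncard := Nat.mul_le_mul_left _ hS
      have hq1' : 1 ≤ q - 1 := by omega
      calc Vq q m (m - (n'+1) + r + 1) + (q-1) * Vq q m (m - (n'+1) + r) + 1
          ≤ (BS r (x ∘ Fin.succ) : Set (Fin m → Fin q)).ncard
            + (q-1) * (BS r x : Set (Fin m → Fin q)).ncard := by
            have := Nat.mul_le_mul_left (q-1) hS
            rw [Nat.mul_add, Nat.mul_one] at this
            omega
        _ ≤ _ := hstep
    · -- base case m = n
      have hm : m = n' + 1 := by omega
      subst hm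
      by_cases hr : r = n' + 1 - 1
      · -- r = n - 1 : box argument
        have := base_box x hn2 hx
        have e1 : (n' + 1 + 1) - (n'+1) + r = n' + 1 := by omega
        rw [e1]
        have e2 : n' + 1 - 1 = r := hr.symm
        rw [e2] at this
        exact this
      · -- r < n - 1
        have hrn' : r < n' := by omega
        have hn'2 : 2 ≤ n' := by omega
        have key : ∀ y : Fin (n'+1) → Fin q, (∃ i j, y i ≠ y j) →
            (∃ i j, (y ∘ Fin.succ) i ≠ (y ∘ Fin.succ) j) →
            Vq q (n'+1+1) ((n'+1+1) - (n'+1) + r) + 1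
              ≤ (BS r y : Set (Fin (n'+1+1) → Fin q)).ncard := by
          intro y hy hty
          have hstep := step_count y (BS r y : Set (Fin (n'+1) → Fin q))
            (fun c z' _ hz' => consMem2 y c hz')
          have hA := ih n' r (y ∘ Fin.succ) hty hr1 hrn' (by omega)
          have hC := lemA hq1 (n'+1) (n'+1) r y (le_refl _)
          have e1 : n' + 1 - n' + r = r + 1 := by omega
          have e2 : (n'+1+1) - (n'+1) + r = r + 1 := by omega
          have e3 : n' + 1 - (n'+1) + r = r := by omega
          rw [e1] at hA
          rw [e3] at hC
          rw [e2, Vq_pascal]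
          calc Vq q (n'+1) (r+1) + (q-1) * Vq q (n'+1) r + 1
              ≤ (BS r (y ∘ Fin.succ) : Set (Fin (n'+1) → Fin q)).ncard
                + (q-1) * (BS r y : Set (Fin (n'+1) → Fin q)).ncard := by
                have := Nat.mul_le_mul_left (q-1) hC
                omega
            _ ≤ _ := hstep
        by_cases htail : ∃ i j, (x ∘ Fin.succ) i ≠ (x ∘ Fin.succ) j
        · exact key x hx htail
        · push_neg at htail
          have htc : ∀ i j : Fin n', x (Fin.succ i) = x (Fin.succ j) := fun i j => htail i j
          have h1 := key (x ∘ Fin.rev) (nonconst_rev x hx)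
            (rev_tail_nonconst x hn'2 hx htc)
          rw [BS_rev_ncard] at h1
          exact h1

end Strict

section Bridge

variable {q n m s p : ℕ}

lemma BS_subset_idsBall (hs : s ≤ n) (x : Fin n → Fin q) :
    (BS (s+p) x : Set (Fin m → Fin q)) ⊆ idsBall q s p x := by
  rintro z ⟨f, hf, hd⟩
  classical
  set M : Finset (Fin n) := Finset.univ.filter (fun i => z (f i) ≠ x i) with hMdef
  have hM : M.card ≤ s + p := hd
  obtain ⟨T, hTcard, hMT⟩ : ∃ T : Finset (Fin n), T.card = s ∧ (M \ T).card ≤ p := by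
    by_cases hsM : s ≤ M.card
    · obtain ⟨T, hTsub, hTcard⟩ := Finset.exists_subset_card_eq hsM
      exact ⟨T, hTcard, by rw [Finset.card_sdiff_of_subset hTsub, hTcard]; omega⟩
    · obtain ⟨T, hTsub, hTcard⟩ := Finset.exists_superset_card_eq (le_of_not_ge hsM)
        (by rw [Fintype.card_fin]; exact hs)
      refine ⟨T, hTcard, ?_⟩
      rw [Finset.sdiff_eq_empty_iff_subset.2 hTsub]
      simp
  set S1 : Finset (Fin n) := Finset.univ \ T with hS1def
  have h1 : S1.card = n - s := by
    rw [hS1def, Finset.card_univ_diff, hTcard, Fintype.card_fin]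
  set S2 : Finset (Fin m) := S1.image f with hS2def
  have h2 : S2.card = n - s := by
    rw [hS2def, Finset.card_image_of_injective _ hf.injective, h1]
  have key : ∀ i : Fin (n-s), (S2.orderIsoOfFin h2 i : Fin m)
      = f ((S1.orderIsoOfFin h1 i : Fin n)) := by
    have huniq := Finset.orderEmbOfFin_unique h2
      (f := fun i : Fin (n-s) => f (S1.orderEmbOfFin h1 i))
      (fun i => Finset.mem_image.2 ⟨_, Finset.orderEmbOfFin_mem S1 h1 i, rfl⟩)
      (hf.comp (S1.orderEmbOfFin h1).strictMono)
    intro i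
    rw [Finset.coe_orderIsoOfFin_apply, Finset.coe_orderIsoOfFin_apply, ← congrFun huniq i]
  refine ⟨S1, S2, h1, h2, ?_⟩
  have hdist : hammingDist (subseqOf x S1 h1) (subseqOf z S2 h2) ≤ (M \ T).card := by
    unfold hammingDist
    apply Finset.card_le_card_of_injOn (fun i => (S1.orderIsoOfFin h1 i : Fin n))
    · intro i hi
      simp only [Finset.mem_coe, Finset.mem_filter, Finset.mem_univ, true_and] at hi
      have hne : z (f ((S1.orderIsoOfFin h1 i : Fin n))) ≠ x ((S1.orderIsoOfFin h1 i : Fin n)) := by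
        intro h
        apply hi
        unfold subseqOf
        rw [key i, h]
      have hmem : (S1.orderIsoOfFin h1 i : Fin n) ∈ S1 := by
        rw [Finset.coe_orderIsoOfFin_apply]
        exact Finset.orderEmbOfFin_mem S1 h1 i
      rw [Finset.mem_coe, Finset.mem_sdiff]
      refine ⟨Finset.mem_filter.2 ⟨Finset.mem_univ _, hne⟩, ?_⟩
      exact (Finset.mem_sdiff.1 hmem).2
    · intro a _ b _ hab
      have := Subtype.ext hab (p := fun u => u ∈ S1)
      exact (S1.orderIsoOfFin h1).injective this
  exact le_trans hdist hMT

end Bridge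

/-- strict inequality for `B_{t,s,p}(x)` in the case `t > s`. -/
theorem idsBall_t_gt_s_strict (n q t s p : ℕ) (hq : 1 ≤ q) (hts : s < t)
    (hsp : s + p < n) (hsp0 : (s, p) ≠ (0, 0))
    (x : Fin n → Fin q) (hx : ∃ i j, x i ≠ x j) :
    (idsBall q s p x : Set (Fin (n + t - s) → Fin q)).ncard >
      ∑ i ∈ Finset.range (t + p + 1), (n + t - s).choose i * (q - 1) ^ i := by
  have hsp1 : 1 ≤ s + p := by
    rcases Nat.eq_zero_or_pos (s + p) with h | h
    · exfalso
      apply hsp0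
      have hs0 : s = 0 := by omega
      have hp0 : p = 0 := by omega
      rw [hs0, hp0]
    · exact h
  have hnm : n < n + t - s := by omega
  have hS := lemS (n + t - s) n (s + p) x hx hsp1 hsp hnm
  have hidx : (n + t - s) - n + (s + p) = t + p := by omega
  rw [hidx] at hS
  have hsub := BS_subset_idsBall (n := n) (m := n + t - s) (s := s) (p := p) (by omega) x
  have hV : Vq q (n + t - s) (t + p)
      = ∑ i ∈ Finset.range (t + p + 1), (n + t - s).choose i * (q - 1) ^ i := rfl
  calc ∑ i ∈ Finset.range (t + p + 1), (n + t - s).choose i * (q - 1) ^ i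
      < Vq q (n + t - s) (t + p) + 1 := by rw [hV]; omega
    _ ≤ (BS (s + p) x : Set (Fin (n + t - s) → Fin q)).ncard := hS
    _ ≤ (idsBall q s p x : Set (Fin (n + t - s) → Fin q)).ncard :=
        Set.ncard_le_ncard hsub (Set.toFinite _)
end

section
/- For all non-negative integers n, q, t, s, p with n ≥ s, q ≥ 1, and t ≥ s, the containment B_{t-s,0,s+p}(x) ⊆ B_{t,s,p}(x) holds for every x ∈ A_q^n; consequently |B_{t,s,p}(x)| ≥ |B_{t-s,0,s+p}(x)|. -/
lemma orderEmbOfFin_image_comp {α : Type*} [LinearOrder α] [DecidableEq α] {n k : ℕ}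
    (f : Fin n → α) (hf : StrictMono f) (A : Finset (Fin n)) (hA : A.card = k)
    (hc : (A.image f).card = k) (i : Fin k) :
    (A.image f).orderEmbOfFin hc i = f (A.orderEmbOfFin hA i) := by
  have := Finset.orderEmbOfFin_unique hc
    (f := fun i => f (A.orderEmbOfFin hA i))
    (fun i => Finset.mem_image_of_mem f (A.orderEmbOfFin_mem hA i))
    (hf.comp (A.orderEmbOfFin hA).strictMono)
  exact (congrFun this i).symm

/-- for `t ≥ s`, `B_{t-s,0,s+p}(x) ⊆ B_{t,s,p}(x)`, hence the
corresponding inequality of sizes. -/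
theorem idsBall_subset_of_s_le_t (n q t s p : ℕ) (hsn : s ≤ n) (hq : 1 ≤ q)
    (hst : s ≤ t) (x : Fin n → Fin q) :
    (idsBall q 0 (s + p) x : Set (Fin (n + t - s) → Fin q)) ⊆
        idsBall q s p x ∧
      (idsBall q s p x : Set (Fin (n + t - s) → Fin q)).ncard ≥
        (idsBall q 0 (s + p) x : Set (Fin (n + t - s) → Fin q)).ncard := by

  have hsub : (idsBall q 0 (s + p) x : Set (Fin (n + t - s) → Fin q)) ⊆ idsBall q s p x := by
    rintro z ⟨S1, S2, h1, h2, hd⟩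
    set e1 := S1.orderEmbOfFin h1 with he1
    set e2 := S2.orderEmbOfFin h2 with he2
    set M : Finset (Fin (n - 0)) :=
      Finset.univ.filter (fun j => x (e1 j) ≠ z (e2 j)) with hM
    have hMcard : M.card ≤ s + p := by
      have : hammingDist (subseqOf x S1 h1) (subseqOf z S2 h2) = M.card := by
        simp only [hammingDist, hM, subseqOf, Finset.coe_orderIsoOfFin_apply, he1, he2]
        rfl
      omega
    obtain ⟨D, hDM, hDcard⟩ : ∃ D : Finset (Fin (n - 0)), (M \ D).card ≤ p ∧ D.card = s := by
      by_cases hc : s ≤ M.card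
      · obtain ⟨D, hD, hDc⟩ := Finset.exists_subset_card_eq hc
        refine ⟨D, ?_, hDc⟩
        have : (M \ D).card = M.card - s := by rw [Finset.card_sdiff_of_subset hD, hDc]
        omega
      · obtain ⟨D, hD, hDc⟩ := Finset.exists_superset_card_eq (le_of_lt (lt_of_not_ge hc))
          (by simp [Fintype.card_fin]; omega)
        refine ⟨D, ?_, hDc⟩
        have : M \ D = ∅ := Finset.sdiff_eq_empty_iff_subset.mpr hD
        simp [this]
    have hDcc : (Dᶜ).card = n - s := by
      have := Finset.card_compl D
      simp only [Fintype.card_fin] at this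
      omega
    have hc1 : ((Dᶜ).image e1).card = n - s := by
      rw [Finset.card_image_of_injective _ e1.injective]; exact hDcc
    have hc2 : ((Dᶜ).image e2).card = n - s := by
      rw [Finset.card_image_of_injective _ e2.injective]; exact hDcc
    refine ⟨(Dᶜ).image e1, (Dᶜ).image e2, hc1, hc2, ?_⟩
    set g := (Dᶜ).orderEmbOfFin hDcc with hg
    have hx : ∀ i, subseqOf x ((Dᶜ).image e1) hc1 i = x (e1 (g i)) := by
      intro i
      simp only [subseqOf, Finset.coe_orderIsoOfFin_apply]
      rw [orderEmbOfFin_image_comp e1 e1.strictMono Dᶜ hDcc hc1 i]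
    have hz : ∀ i, subseqOf z ((Dᶜ).image e2) hc2 i = z (e2 (g i)) := by
      intro i
      simp only [subseqOf, Finset.coe_orderIsoOfFin_apply]
      rw [orderEmbOfFin_image_comp e2 e2.strictMono Dᶜ hDcc hc2 i]
    have : hammingDist (subseqOf x ((Dᶜ).image e1) hc1) (subseqOf z ((Dᶜ).image e2) hc2)
        ≤ (M \ D).card := by
      simp only [hammingDist]
      apply Finset.card_le_card_of_injOn g
      · intro i hi
        simp only [Finset.mem_coe, Finset.mem_filter, Finset.mem_univ, true_and] at hi
        rw [hx i, hz i] at hi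
        have hgi : g i ∈ Dᶜ := Finset.orderEmbOfFin_mem _ hDcc i
        simp only [Finset.mem_compl] at hgi
        simp only [Finset.mem_coe, Finset.mem_sdiff, hM, Finset.mem_filter, Finset.mem_univ, true_and]
        exact ⟨hi, hgi⟩
      · exact fun a _ b _ hab => g.injective hab
    omega
  exact ⟨hsub, Set.ncard_le_ncard hsub (Set.toFinite _)⟩
end
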